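/- arXiv:2309.11772 — 2 statements merged into one kernel-verified Lean document; each statement's English description precedes it below -/
import Mathlib

section
/- Let Z ~ N(μ, σ²) with σ > 0. For fixed y ∈ ℝ, the continuous ranked probability score satisfies CRPS = ∫_ℝ (Φ((t-μ)/σ) - 1{t ≥ y})² dt = σ[ (y-μ)/σ · (2Φ((y-μ)/σ) - 1) + 2φ((y-μ)/σ) - 1/√π ], where φ and Φ are the standard normal density and distribution function. -/
open Real MeasureTheory Set Filter Topology

noncomputable def stdPDF (t : ℝ) : ℝ := (Real.sqrt (2 * Real.pi))⁻¹ * Real.exp (-t^2/2)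

noncomputable def stdCDF (t : ℝ) : ℝ := ∫ s in Set.Iic t, stdPDF s

lemma stdPDF_eq : stdPDF = fun t => (Real.sqrt (2 * Real.pi))⁻¹ * Real.exp (-(1/2 : ℝ) * t^2) := by
  funext t; unfold stdPDF; ring_nf

lemma stdPDF_nonneg (t : ℝ) : 0 ≤ stdPDF t := by
  unfold stdPDF
  positivity

lemma stdPDF_even (t : ℝ) : stdPDF (-t) = stdPDF t := by
  unfold stdPDF; rw [neg_sq]

lemma continuous_stdPDF : Continuous stdPDF := by
  unfold stdPDF; fun_prop

lemma integrable_stdPDF : Integrable stdPDF := by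
  rw [stdPDF_eq]
  exact (integrable_exp_neg_mul_sq (by norm_num)).const_mul _

lemma integral_stdPDF : ∫ t : ℝ, stdPDF t = 1 := by
  rw [stdPDF_eq, integral_const_mul, integral_gaussian]
  rw [show Real.pi / (1/2) = 2 * Real.pi by ring]
  rw [inv_mul_cancel₀]
  positivity

lemma stdPDF_le (t : ℝ) : stdPDF t ≤ (Real.sqrt (2 * Real.pi))⁻¹ := by
  unfold stdPDF
  have h : Real.exp (-t^2/2) ≤ 1 := by
    rw [Real.exp_le_one_iff]; nlinarith [sq_nonneg t]
  nlinarith [Real.sqrt_nonneg (2 * Real.pi), inv_nonneg.mpr (Real.sqrt_nonneg (2 * Real.pi))]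

lemma hasDerivAt_stdPDF (t : ℝ) : HasDerivAt stdPDF (-t * stdPDF t) t := by
  have h1 : HasDerivAt (fun s : ℝ => -s^2/2) (-t) t := by
    have := ((hasDerivAt_pow 2 t).neg).div_const 2
    refine this.congr_deriv ?_; simp; ring
  have h2 := (h1.exp).const_mul ((Real.sqrt (2 * Real.pi))⁻¹)
  refine h2.congr_deriv ?_
  unfold stdPDF; ring

lemma hasDerivAt_stdCDF (x : ℝ) : HasDerivAt stdCDF (stdPDF x) x := by
  have key : stdCDF = fun u => stdCDF 0 + ∫ s in (0:ℝ)..u, stdPDF s := by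
    funext u
    have := intervalIntegral.integral_Iic_sub_Iic (f := stdPDF) (μ := volume)
      (integrable_stdPDF.integrableOn) (integrable_stdPDF.integrableOn) (a := 0) (b := u)
    unfold stdCDF
    linarith [this]
  rw [key]
  refine HasDerivAt.const_add _ ?_
  exact intervalIntegral.integral_hasDerivAt_right
    (integrable_stdPDF.intervalIntegrable)
    (continuous_stdPDF.stronglyMeasurableAtFilter _ _)
    continuous_stdPDF.continuousAt

lemma continuous_stdCDF : Continuous stdCDF :=
  continuous_iff_continuousAt.mpr fun x => (hasDerivAt_stdCDF x).continuousAt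

lemma stdCDF_nonneg (t : ℝ) : 0 ≤ stdCDF t :=
  setIntegral_nonneg measurableSet_Iic fun s _ => stdPDF_nonneg s

lemma stdCDF_le_one (t : ℝ) : stdCDF t ≤ 1 := by
  rw [← integral_stdPDF]
  exact setIntegral_le_integral integrable_stdPDF (ae_of_all _ stdPDF_nonneg)

lemma stdCDF_neg (t : ℝ) : stdCDF (-t) = 1 - stdCDF t := by
  have h1 : stdCDF (-t) = ∫ s in Ioi t, stdPDF s := by
    have h2 : (∫ x in Iic (-t), stdPDF (-x)) = ∫ x in Ioi (- -t), stdPDF x :=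
      integral_comp_neg_Iic (-t) stdPDF
    rw [neg_neg] at h2
    rw [← h2]
    unfold stdCDF
    exact setIntegral_congr_fun measurableSet_Iic fun s _ => (stdPDF_even s).symm
  have h3 := intervalIntegral.integral_Iic_add_Ioi (b := t) (μ := volume)
    integrable_stdPDF.integrableOn integrable_stdPDF.integrableOn
  rw [integral_stdPDF] at h3
  unfold stdCDF at *
  linarith
lemma tendsto_sq_atBot : Tendsto (fun s : ℝ => s^2) atBot atTop := by
  have h : Tendsto (fun s : ℝ => -s) atBot atTop := tendsto_neg_atBot_atTop
  have := h.atTop_mul_atTop₀ h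
  exact this.congr fun s => by rw [pow_two]; ring

lemma tendsto_sq_atTop : Tendsto (fun s : ℝ => s^2) atTop atTop := by
  have h := tendsto_id (α := ℝ) (x := atTop)
  have := h.atTop_mul_atTop₀ h
  exact this.congr fun s => by rw [pow_two]; rfl

lemma tendsto_stdPDF_aux {l : Filter ℝ} (h : Tendsto (fun s : ℝ => s^2) l atTop) :
    Tendsto stdPDF l (𝓝 0) := by
  rw [stdPDF_eq]
  rw [show (0:ℝ) = (Real.sqrt (2 * Real.pi))⁻¹ * 0 by ring]
  refine Tendsto.const_mul _ ?_
  refine Real.tendsto_exp_atBot.comp ?_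
  have h2 : Tendsto (fun s : ℝ => (1/2 : ℝ) * s^2) l atTop :=
    h.const_mul_atTop (by norm_num)
  have := tendsto_neg_atTop_atBot.comp h2
  exact this.congr fun s => by simp [Function.comp]

lemma tendsto_stdPDF_atBot : Tendsto stdPDF atBot (𝓝 0) := tendsto_stdPDF_aux tendsto_sq_atBot
lemma tendsto_stdPDF_atTop : Tendsto stdPDF atTop (𝓝 0) := tendsto_stdPDF_aux tendsto_sq_atTop

lemma tendsto_stdCDF_atBot : Tendsto stdCDF atBot (𝓝 0) := by
  have h := intervalIntegral_tendsto_integral_Iic (0:ℝ) (μ := volume)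
    (integrable_stdPDF.integrableOn) (tendsto_id (α := ℝ) (x := atBot))
  have key : ∀ r : ℝ, stdCDF r = stdCDF 0 - ∫ s in r..(0:ℝ), stdPDF s := by
    intro r
    have := intervalIntegral.integral_Iic_sub_Iic (f := stdPDF) (μ := volume)
      integrable_stdPDF.integrableOn integrable_stdPDF.integrableOn (a := r) (b := 0)
    unfold stdCDF at *; linarith
  have h2 : Tendsto (fun r : ℝ => stdCDF 0 - ∫ s in r..(0:ℝ), stdPDF s) atBot
      (𝓝 (stdCDF 0 - stdCDF 0)) := tendsto_const_nhds.sub h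
  rw [sub_self] at h2
  exact h2.congr fun r => (key r).symm

lemma tendsto_stdCDF_atTop : Tendsto stdCDF atTop (𝓝 1) := by
  have h : Tendsto (fun r : ℝ => stdCDF (-r)) atTop (𝓝 0) :=
    tendsto_stdCDF_atBot.comp tendsto_neg_atTop_atBot
  have h2 : Tendsto (fun r : ℝ => 1 - stdCDF (-r)) atTop (𝓝 (1 - 0)) :=
    tendsto_const_nhds.sub h
  rw [sub_zero] at h2
  refine h2.congr fun r => ?_
  rw [stdCDF_neg, sub_sub_cancel]

lemma stdCDF_le_stdPDF {s : ℝ} (hs : s ≤ -1) : stdCDF s ≤ stdPDF s := by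
  set ψ : ℝ → ℝ := fun u => stdPDF u - stdCDF u with hψ
  have hd : ∀ u : ℝ, HasDerivAt ψ (-u * stdPDF u - stdPDF u) u :=
    fun u => (hasDerivAt_stdPDF u).sub (hasDerivAt_stdCDF u)
  have hmono : MonotoneOn ψ (Iic (-1 : ℝ)) := by
    refine monotoneOn_of_deriv_nonneg (convex_Iic _) ?_ ?_ ?_
    · exact (Continuous.sub (continuous_iff_continuousAt.mpr fun x =>
        (hasDerivAt_stdPDF x).continuousAt) continuous_stdCDF).continuousOn
    · exact fun x _ => ((hd x).differentiableAt).differentiableWithinAt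
    · intro x hx
      rw [interior_Iic] at hx
      rw [(hd x).deriv]
      have h1 : (1:ℝ) ≤ -x := by have := hx.out; linarith
      nlinarith [stdPDF_nonneg x]
  have hlim : Tendsto ψ atBot (𝓝 0) := by
    have := tendsto_stdPDF_atBot.sub tendsto_stdCDF_atBot
    rwa [sub_zero] at this
  have h0 : (0:ℝ) ≤ ψ s := by
    refine le_of_tendsto hlim ?_
    filter_upwards [Iic_mem_atBot s] with u hu
    exact hmono (le_trans hu hs) hs hu
  simpa [hψ] using h0

lemma one_sub_stdCDF_le {s : ℝ} (hs : 1 ≤ s) : 1 - stdCDF s ≤ stdPDF s := by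
  have h := stdCDF_le_stdPDF (s := -s) (by linarith)
  rwa [stdCDF_neg, stdPDF_even] at h
lemma pdf_sqrt_two (s : ℝ) :
    Real.sqrt 2 * stdPDF (Real.sqrt 2 * s) = 2 * Real.sqrt Real.pi * stdPDF s ^ 2 := by
  unfold stdPDF
  have h2 : (Real.sqrt 2 * s)^2 = 2 * s^2 := by
    rw [mul_pow, Real.sq_sqrt (by norm_num : (0:ℝ) ≤ 2)]
  rw [h2, mul_pow, pow_two (Real.exp _), ← Real.exp_add, show -s^2/2 + -s^2/2 = -(2*s^2)/2 by ring]
  have hs2 : Real.sqrt (2 * Real.pi) = Real.sqrt 2 * Real.sqrt Real.pi :=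
    Real.sqrt_mul (by norm_num) _
  have hpi : Real.sqrt Real.pi * Real.sqrt Real.pi = Real.pi :=
    Real.mul_self_sqrt Real.pi_pos.le
  have h2' : Real.sqrt 2 * Real.sqrt 2 = 2 := Real.mul_self_sqrt (by norm_num)
  have hπpos : (0:ℝ) < Real.sqrt Real.pi := Real.sqrt_pos.mpr Real.pi_pos
  have h2pos : (0:ℝ) < Real.sqrt 2 := Real.sqrt_pos.mpr (by norm_num)
  rw [hs2]
  rw [mul_inv]
  field_simp
  linear_combination h2'

lemma hasDerivAt_K (s : ℝ) :
    HasDerivAt (fun u : ℝ => stdCDF (Real.sqrt 2 * u))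
      (Real.sqrt 2 * stdPDF (Real.sqrt 2 * s)) s := by
  have hin : HasDerivAt (fun u : ℝ => Real.sqrt 2 * u) (Real.sqrt 2) s := by
    simpa using (hasDerivAt_id s).const_mul (Real.sqrt 2)
  have := (hasDerivAt_stdCDF (Real.sqrt 2 * s)).comp s hin
  exact this.congr_deriv (mul_comm _ _)

noncomputable def crpsG (s : ℝ) : ℝ :=
  s * stdCDF s^2 + 2 * stdPDF s * stdCDF s
    - (1 / Real.sqrt Real.pi) * stdCDF (Real.sqrt 2 * s)

noncomputable def crpsH (s : ℝ) : ℝ :=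
  s * (1 - stdCDF s)^2 - 2 * stdPDF s * (1 - stdCDF s)
    - (1 / Real.sqrt Real.pi) * stdCDF (Real.sqrt 2 * s)

lemma hasDerivAt_crpsG (s : ℝ) : HasDerivAt crpsG (stdCDF s ^ 2) s := by
  have h1 : HasDerivAt (fun u : ℝ => u * stdCDF u ^ 2)
      (1 * stdCDF s ^ 2 + s * (2 * stdCDF s ^ 1 * stdPDF s)) s :=
    (hasDerivAt_id s).mul ((hasDerivAt_stdCDF s).pow 2)
  have h2 : HasDerivAt (fun u : ℝ => 2 * stdPDF u * stdCDF u)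
      ((2 * (-s * stdPDF s)) * stdCDF s + (2 * stdPDF s) * stdPDF s) s :=
    ((hasDerivAt_stdPDF s).const_mul 2).mul (hasDerivAt_stdCDF s)
  have h3 : HasDerivAt (fun u : ℝ => (1 / Real.sqrt Real.pi) * stdCDF (Real.sqrt 2 * u))
      ((1 / Real.sqrt Real.pi) * (Real.sqrt 2 * stdPDF (Real.sqrt 2 * s))) s :=
    (hasDerivAt_K s).const_mul _
  have h := (h1.add h2).sub h3
  have hπpos : (0:ℝ) < Real.sqrt Real.pi := Real.sqrt_pos.mpr Real.pi_pos
  refine h.congr_deriv ?_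
  rw [show (1 / Real.sqrt Real.pi) * (Real.sqrt 2 * stdPDF (Real.sqrt 2 * s))
      = (1 / Real.sqrt Real.pi) * (2 * Real.sqrt Real.pi * stdPDF s ^ 2) by
    rw [pdf_sqrt_two]]
  field_simp
  ring

lemma hasDerivAt_crpsH (s : ℝ) : HasDerivAt crpsH ((1 - stdCDF s) ^ 2) s := by
  have hc : HasDerivAt (fun u : ℝ => 1 - stdCDF u) (-stdPDF s) s := by
    simpa using (hasDerivAt_stdCDF s).const_sub 1
  have h1 : HasDerivAt (fun u : ℝ => u * (1 - stdCDF u) ^ 2)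
      (1 * (1 - stdCDF s) ^ 2 + s * (2 * (1 - stdCDF s) ^ 1 * (-stdPDF s))) s :=
    (hasDerivAt_id s).mul (hc.pow 2)
  have h2 : HasDerivAt (fun u : ℝ => 2 * stdPDF u * (1 - stdCDF u))
      ((2 * (-s * stdPDF s)) * (1 - stdCDF s) + (2 * stdPDF s) * (-stdPDF s)) s :=
    ((hasDerivAt_stdPDF s).const_mul 2).mul hc
  have h3 : HasDerivAt (fun u : ℝ => (1 / Real.sqrt Real.pi) * stdCDF (Real.sqrt 2 * u))
      ((1 / Real.sqrt Real.pi) * (Real.sqrt 2 * stdPDF (Real.sqrt 2 * s))) s :=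
    (hasDerivAt_K s).const_mul _
  have h := (h1.sub h2).sub h3
  have hπpos : (0:ℝ) < Real.sqrt Real.pi := Real.sqrt_pos.mpr Real.pi_pos
  refine h.congr_deriv ?_
  rw [show (1 / Real.sqrt Real.pi) * (Real.sqrt 2 * stdPDF (Real.sqrt 2 * s))
      = (1 / Real.sqrt Real.pi) * (2 * Real.sqrt Real.pi * stdPDF s ^ 2) by
    rw [pdf_sqrt_two]]
  field_simp
  ring
lemma tendsto_mul_exp_atTop : Tendsto (fun x : ℝ => x * Real.exp (-x^2)) atTop (𝓝 0) := by
  have hup : Tendsto (fun x : ℝ => x * Real.exp (-x)) atTop (𝓝 0) := by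
    simpa [pow_one] using Real.tendsto_pow_mul_exp_neg_atTop_nhds_zero 1
  refine tendsto_of_tendsto_of_tendsto_of_le_of_le' tendsto_const_nhds hup ?_ ?_
  · filter_upwards [eventually_ge_atTop (0:ℝ)] with x hx
    positivity
  · filter_upwards [eventually_ge_atTop (1:ℝ)] with x hx
    have h : Real.exp (-x^2) ≤ Real.exp (-x) := by
      rw [Real.exp_le_exp]; nlinarith
    nlinarith [Real.exp_pos (-x^2)]

lemma mul_pdf_sq_eq (s : ℝ) : s * stdPDF s ^ 2
    = ((Real.sqrt (2 * Real.pi))⁻¹)^2 * (s * Real.exp (-s^2)) := by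
  unfold stdPDF
  rw [mul_pow, pow_two (Real.exp _), ← Real.exp_add,
    show -s^2/2 + -s^2/2 = -s^2 by ring]
  ring

lemma tendsto_mul_pdf_sq_atTop : Tendsto (fun s : ℝ => s * stdPDF s ^ 2) atTop (𝓝 0) := by
  have := tendsto_mul_exp_atTop.const_mul (((Real.sqrt (2 * Real.pi))⁻¹)^2)
  rw [mul_zero] at this
  exact this.congr fun s => (mul_pdf_sq_eq s).symm

lemma tendsto_mul_pdf_sq_atBot : Tendsto (fun s : ℝ => s * stdPDF s ^ 2) atBot (𝓝 0) := by
  have hneg : Tendsto (fun s : ℝ => -s) atBot atTop := tendsto_neg_atBot_atTop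
  have := (tendsto_mul_pdf_sq_atTop.comp hneg).neg
  rw [neg_zero] at this
  refine this.congr fun s => ?_
  simp only [Function.comp]
  rw [stdPDF_even]
  ring

lemma tendsto_K_atBot : Tendsto (fun s : ℝ => stdCDF (Real.sqrt 2 * s)) atBot (𝓝 0) := by
  refine tendsto_stdCDF_atBot.comp ?_
  exact Tendsto.const_mul_atBot (Real.sqrt_pos.mpr (by norm_num)) tendsto_id

lemma tendsto_K_atTop : Tendsto (fun s : ℝ => stdCDF (Real.sqrt 2 * s)) atTop (𝓝 1) := by
  refine tendsto_stdCDF_atTop.comp ?_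
  exact Tendsto.const_mul_atTop (Real.sqrt_pos.mpr (by norm_num)) tendsto_id

lemma tendsto_crpsG_atBot : Tendsto crpsG atBot (𝓝 0) := by
  have h1 : Tendsto (fun s : ℝ => s * stdCDF s ^ 2) atBot (𝓝 0) := by
    refine tendsto_of_tendsto_of_tendsto_of_le_of_le' tendsto_mul_pdf_sq_atBot
      tendsto_const_nhds ?_ ?_
    · filter_upwards [Iic_mem_atBot (-1:ℝ)] with s hs
      have hs' : s ≤ -1 := hs
      have h2 := stdCDF_le_stdPDF hs'
      have h3 := stdCDF_nonneg s
      have hsq : stdCDF s ^ 2 ≤ stdPDF s ^ 2 := pow_le_pow_left₀ h3 h2 2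
      exact mul_le_mul_of_nonpos_left hsq (le_trans hs' (by norm_num))
    · filter_upwards [Iic_mem_atBot (0:ℝ)] with s hs
      exact mul_nonpos_of_nonpos_of_nonneg hs (by positivity)
  have h2 : Tendsto (fun s : ℝ => 2 * stdPDF s * stdCDF s) atBot (𝓝 0) := by
    have hup : Tendsto (fun s : ℝ => 2 * stdPDF s) atBot (𝓝 0) := by
      have := tendsto_stdPDF_atBot.const_mul (2:ℝ); rwa [mul_zero] at this
    refine tendsto_of_tendsto_of_tendsto_of_le_of_le' tendsto_const_nhds hup ?_ ?_
    · refine Eventually.of_forall fun s => ?_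
      have := stdPDF_nonneg s; have := stdCDF_nonneg s; positivity
    · refine Eventually.of_forall fun s => ?_
      have h3 := stdCDF_le_one s; have h4 := stdPDF_nonneg s; nlinarith
  have h3 : Tendsto (fun s : ℝ => (1 / Real.sqrt Real.pi) * stdCDF (Real.sqrt 2 * s))
      atBot (𝓝 0) := by
    have := tendsto_K_atBot.const_mul (1 / Real.sqrt Real.pi); rwa [mul_zero] at this
  have := (h1.add h2).sub h3
  rw [add_zero, sub_zero] at this
  exact this

lemma tendsto_crpsH_atTop : Tendsto crpsH atTop (𝓝 (-(1 / Real.sqrt Real.pi))) := by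
  have h1 : Tendsto (fun s : ℝ => s * (1 - stdCDF s) ^ 2) atTop (𝓝 0) := by
    refine tendsto_of_tendsto_of_tendsto_of_le_of_le' tendsto_const_nhds
      tendsto_mul_pdf_sq_atTop ?_ ?_
    · filter_upwards [eventually_ge_atTop (0:ℝ)] with s hs
      have h3 := stdCDF_le_one s
      have : (0:ℝ) ≤ 1 - stdCDF s := by linarith
      positivity
    · filter_upwards [eventually_ge_atTop (1:ℝ)] with s hs
      have h2 := one_sub_stdCDF_le hs
      have h3 := stdCDF_le_one s
      have hsq : (1 - stdCDF s) ^ 2 ≤ stdPDF s ^ 2 :=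
        pow_le_pow_left₀ (by linarith) h2 2
      exact mul_le_mul_of_nonneg_left hsq (by linarith)
  have h2 : Tendsto (fun s : ℝ => 2 * stdPDF s * (1 - stdCDF s)) atTop (𝓝 0) := by
    have hup : Tendsto (fun s : ℝ => 2 * stdPDF s) atTop (𝓝 0) := by
      have := tendsto_stdPDF_atTop.const_mul (2:ℝ); rwa [mul_zero] at this
    refine tendsto_of_tendsto_of_tendsto_of_le_of_le' tendsto_const_nhds hup ?_ ?_
    · refine Eventually.of_forall fun s => ?_
      have := stdPDF_nonneg s; have := stdCDF_le_one s; nlinarith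
    · refine Eventually.of_forall fun s => ?_
      have h3 := stdCDF_nonneg s; have h4 := stdPDF_nonneg s; nlinarith
  have h3 : Tendsto (fun s : ℝ => (1 / Real.sqrt Real.pi) * stdCDF (Real.sqrt 2 * s))
      atTop (𝓝 (1 / Real.sqrt Real.pi)) := by
    have := tendsto_K_atTop.const_mul (1 / Real.sqrt Real.pi); rwa [mul_one] at this
  have := (h1.sub h2).sub h3
  rw [sub_zero, zero_sub] at this
  exact this
lemma integrableOn_cdf_sq (z : ℝ) :
    IntegrableOn (fun s => stdCDF s ^ 2) (Iic z) := by
  have hsub : Iic z ⊆ Iic (min z (-1)) ∪ Icc (min z (-1)) z := by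
    intro s hs
    rcases le_or_gt s (min z (-1)) with h | h
    · exact Or.inl h
    · exact Or.inr ⟨h.le, hs⟩
  refine IntegrableOn.mono_set (IntegrableOn.union ?_ ?_) hsub
  · refine Integrable.mono' (integrable_stdPDF.integrableOn) ?_ ?_
    · exact ((continuous_stdCDF.pow 2)).aestronglyMeasurable.restrict
    · rw [ae_restrict_iff' measurableSet_Iic]
      refine ae_of_all _ fun s hs => ?_
      have h1 : s ≤ -1 := le_trans hs (min_le_right _ _)
      have h2 := stdCDF_le_stdPDF h1
      have h3 := stdCDF_nonneg s
      have h4 := stdCDF_le_one s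
      rw [Real.norm_eq_abs, abs_of_nonneg (by positivity)]
      nlinarith
  · exact (continuous_stdCDF.pow 2).integrableOn_Icc

lemma integrableOn_one_sub_cdf_sq (z : ℝ) :
    IntegrableOn (fun s => (1 - stdCDF s) ^ 2) (Ioi z) := by
  have hsub : Ioi z ⊆ Icc z (max z 1) ∪ Ici (max z 1) := by
    intro s hs
    rcases le_or_gt s (max z 1) with h | h
    · exact Or.inl ⟨hs.out.le, h⟩
    · exact Or.inr h.le
  refine IntegrableOn.mono_set (IntegrableOn.union ?_ ?_) hsub
  · exact ((continuous_const.sub continuous_stdCDF).pow 2).integrableOn_Icc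
  · refine Integrable.mono' (integrable_stdPDF.integrableOn) ?_ ?_
    · exact ((continuous_const.sub continuous_stdCDF).pow 2).aestronglyMeasurable.restrict
    · rw [ae_restrict_iff' measurableSet_Ici]
      refine ae_of_all _ fun s hs => ?_
      have h1 : (1:ℝ) ≤ s := le_trans (le_max_right _ _) hs
      have h2 := one_sub_stdCDF_le h1
      have h3 := stdCDF_nonneg s
      have h4 := stdCDF_le_one s
      rw [Real.norm_eq_abs, abs_of_nonneg (by positivity)]
      nlinarith

lemma integral_cdf_sq (z : ℝ) : ∫ s in Iio z, stdCDF s ^ 2 = crpsG z := by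
  have h := integral_Iic_of_hasDerivAt_of_tendsto' (f := crpsG)
    (fun x _ => hasDerivAt_crpsG x) (integrableOn_cdf_sq z) tendsto_crpsG_atBot
  rw [sub_zero] at h
  rw [← integral_Iic_eq_integral_Iio]
  exact h

lemma integral_one_sub_cdf_sq (z : ℝ) :
    ∫ s in Ioi z, (1 - stdCDF s) ^ 2 = -(1 / Real.sqrt Real.pi) - crpsH z := by
  exact integral_Ioi_of_hasDerivAt_of_tendsto' (f := crpsH)
    (fun x _ => hasDerivAt_crpsH x) (integrableOn_one_sub_cdf_sq z) tendsto_crpsH_atTop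

lemma std_case (z : ℝ) :
    (∫ s : ℝ, (stdCDF s - (if z ≤ s then (1:ℝ) else 0)) ^ 2) =
      z * (2 * stdCDF z - 1) + 2 * stdPDF z - 1 / Real.sqrt Real.pi := by
  set g : ℝ → ℝ := fun s => (stdCDF s - (if z ≤ s then (1:ℝ) else 0)) ^ 2 with hg
  have heq1 : EqOn g (fun s => stdCDF s ^ 2) (Iio z) := by
    intro s hs
    simp only [hg]
    rw [if_neg (not_le.mpr hs), sub_zero]
  have heq2 : EqOn g (fun s => (1 - stdCDF s) ^ 2) (Ici z) := by
    intro s hs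
    simp only [hg]
    rw [if_pos hs.out]
    ring
  have hint1 : IntegrableOn g (Iio z) :=
    (integrableOn_congr_fun heq1 measurableSet_Iio).mpr
      ((integrableOn_cdf_sq z).mono_set Iio_subset_Iic_self)
  have hint2 : IntegrableOn g (Ici z) :=
    (integrableOn_congr_fun heq2 measurableSet_Ici).mpr
      ((integrableOn_Ici_iff_integrableOn_Ioi (f := fun s => (1 - stdCDF s) ^ 2)).mpr (integrableOn_one_sub_cdf_sq z))
  have hint : Integrable g := by
    rw [← integrableOn_univ, ← Iio_union_Ici (a := z)]
    exact hint1.union hint2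
  have hsplit : (∫ s : ℝ, g s) = (∫ s in Iio z, g s) + ∫ s in Ici z, g s := by
    rw [← compl_Iio (a := z)]
    exact (integral_add_compl measurableSet_Iio hint).symm
  rw [hsplit,
    setIntegral_congr_fun measurableSet_Iio heq1,
    setIntegral_congr_fun measurableSet_Ici heq2,
    integral_Ici_eq_integral_Ioi,
    integral_cdf_sq, integral_one_sub_cdf_sq]
  unfold crpsG crpsH
  ring

theorem crps_gaussian_closed_form (μ σ y : ℝ) (hσ : 0 < σ) :
    (∫ t : ℝ, (stdCDF ((t - μ)/σ) - (if y ≤ t then (1:ℝ) else 0))^2) =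
      σ * ((y - μ)/σ * (2 * stdCDF ((y - μ)/σ) - 1) + 2 * stdPDF ((y - μ)/σ)
        - 1 / Real.sqrt Real.pi) := by
  set z := (y - μ)/σ with hz
  set g : ℝ → ℝ := fun s => (stdCDF s - (if z ≤ s then (1:ℝ) else 0)) ^ 2 with hg
  have hpt : ∀ t : ℝ, (stdCDF ((t - μ)/σ) - (if y ≤ t then (1:ℝ) else 0))^2
      = g ((t - μ)/σ) := by
    intro t
    have hiff : y ≤ t ↔ z ≤ (t - μ)/σ := by
      rw [hz, div_le_div_iff_of_pos_right hσ]
      constructor <;> intro h <;> linarith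
    simp only [hg]
    by_cases h : y ≤ t
    · rw [if_pos h, if_pos (hiff.mp h)]
    · rw [if_neg h, if_neg (fun hc => h (hiff.mpr hc))]
  have hfun : (fun t : ℝ => (stdCDF ((t - μ)/σ) - (if y ≤ t then (1:ℝ) else 0))^2)
      = fun t : ℝ => (fun u : ℝ => g (u/σ)) (t - μ) := by
    funext t
    simpa using hpt t
  rw [hfun, integral_sub_right_eq_self (μ := volume) (fun u : ℝ => g (u/σ)) μ,
    MeasureTheory.Measure.integral_comp_div g σ, std_case z, abs_of_pos hσ, smul_eq_mul]
end

section
/- Let Z ~ N(μ, σ²) with σ² ≥ 0 and θ > 0, and let y₁, …, yₙ ∈ ℝ and r₁, …, rₙ ∈ ℝ. Define m = ∑ᵢ rᵢ E[exp(-(yᵢ - Z)²/θ)]. Then E[(∑ᵢ rᵢ exp(-(yᵢ - Z)²/θ))²] = ∑_{i,k} rᵢ rₖ (1 + 4σ²/θ)^(-1/2) exp(-((yᵢ+yₖ)/2 - μ)²/(θ/2 + 2σ²) - (yᵢ - yₖ)²/(2θ)), and consequently Var(∑ᵢ rᵢ exp(-(yᵢ - Z)²/θ)) equals this double sum minus m².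 -/
open MeasureTheory ProbabilityTheory
open scoped NNReal ENNReal

lemma integral_gaussianReal_pdf (μ : ℝ) {v : NNReal} (hv : v ≠ 0) (g : ℝ → ℝ) :
    ∫ z, g z ∂(gaussianReal μ v) = ∫ z, gaussianPDFReal μ v z * g z := by
  rw [gaussianReal_of_var_ne_zero _ hv]
  have h : gaussianPDF μ v = fun x => ((Real.toNNReal (gaussianPDFReal μ v x) : ℝ≥0) : ℝ≥0∞) :=
    rfl
  rw [h, integral_withDensity_eq_integral_smul ((measurable_gaussianPDFReal μ v).real_toNNReal)]
  congr 1; ext x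
  simp [NNReal.smul_def, Real.coe_toNNReal _ (gaussianPDFReal_nonneg μ v x)]

lemma core (μ : ℝ) (v : NNReal) {s : ℝ} (hs : 0 < s) (c : ℝ) :
    ∫ z, Real.exp (-(z - c)^2 / s) ∂(gaussianReal μ v) =
      (1 + 2*(v:ℝ)/s) ^ (-(1:ℝ)/2) * Real.exp (-(c - μ)^2 / (s + 2*(v:ℝ))) := by
  by_cases hv : v = 0
  · subst hv
    simp
    ring_nf
  · have hv0 : 0 < (v:ℝ) := by positivity
    set vr : ℝ := (v : ℝ)
    have hsv : 0 < s + 2*vr := by positivity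
    set a : ℝ := (s + 2*vr)/(2*vr*s) with ha
    have ha0 : 0 < a := by positivity
    set d : ℝ := (2*vr*c + s*μ)/(s + 2*vr) with hd
    have key : ∀ z : ℝ, -(z-μ)^2/(2*vr) + (-(z - c)^2/s)
        = -(c-μ)^2/(s+2*vr) + (-(a*(z-d)^2)) := by
      intro z
      rw [hd, ha]
      field_simp
      ring
    rw [integral_gaussianReal_pdf μ hv]
    unfold gaussianPDFReal
    have hrw : ∀ z : ℝ, (Real.sqrt (2*Real.pi*vr))⁻¹ * Real.exp (-(z-μ)^2/(2*vr))
        * Real.exp (-(z - c)^2/s)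
        = ((Real.sqrt (2*Real.pi*vr))⁻¹ * Real.exp (-(c-μ)^2/(s+2*vr)))
          * Real.exp (-(a*(z-d)^2)) := by
      intro z
      rw [mul_assoc, ← Real.exp_add, key z, Real.exp_add]
      ring
    calc ∫ z, (Real.sqrt (2*Real.pi*vr))⁻¹ * Real.exp (-(z-μ)^2/(2*vr))
            * Real.exp (-(z - c)^2/s)
        = ∫ z, ((Real.sqrt (2*Real.pi*vr))⁻¹ * Real.exp (-(c-μ)^2/(s+2*vr)))
            * Real.exp (-(a*(z-d)^2)) := by
          congr 1; ext z; exact hrw z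
      _ = ((Real.sqrt (2*Real.pi*vr))⁻¹ * Real.exp (-(c-μ)^2/(s+2*vr)))
            * ∫ z, Real.exp (-(a*(z-d)^2)) := by rw [integral_const_mul]
      _ = ((Real.sqrt (2*Real.pi*vr))⁻¹ * Real.exp (-(c-μ)^2/(s+2*vr)))
            * Real.sqrt (Real.pi / a) := by
          congr 1
          rw [integral_sub_right_eq_self (μ := volume) (fun x => Real.exp (-(a * x^2))) d]
          simpa [neg_mul] using integral_gaussian a
      _ = (1 + 2*vr/s) ^ (-(1:ℝ)/2) * Real.exp (-(c - μ)^2 / (s + 2*vr)) := by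
          rw [show (1 + 2*vr/s : ℝ) = (s+2*vr)/s by field_simp]
          have hx : (0:ℝ) < (s+2*vr)/s := by positivity
          have hconst : (Real.sqrt (2*Real.pi*vr))⁻¹ * Real.sqrt (Real.pi/a)
              = ((s+2*vr)/s) ^ (-(1:ℝ)/2) := by
            rw [← Real.sqrt_inv (2*Real.pi*vr), ← Real.sqrt_mul (by positivity),
              show (-(1:ℝ)/2) = -(1/2 : ℝ) by norm_num, Real.rpow_neg hx.le,
              ← Real.sqrt_eq_rpow, ← Real.sqrt_inv]
            congr 1
            rw [ha]
            field_simp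
          linear_combination Real.exp (-(c-μ)^2/(s+2*vr)) * hconst

theorem gaussian_sqexp_second_moment_sum (μ : ℝ) (v : NNReal) (θ : ℝ) (hθ : 0 < θ)
    (n : ℕ) (y r : Fin n → ℝ) :
    (∫ z, (∑ i, r i * Real.exp (-(y i - z)^2/θ))^2 ∂(gaussianReal μ v) =
      ∑ i, ∑ k, r i * r k * (1 + 4 * (v:ℝ)/θ) ^ (-(1:ℝ)/2) *
        Real.exp (-((y i + y k)/2 - μ)^2 / (θ/2 + 2 * (v:ℝ)) - (y i - y k)^2/(2*θ))) ∧
    variance (fun z => ∑ i, r i * Real.exp (-(y i - z)^2/θ)) (gaussianReal μ v) =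
      (∑ i, ∑ k, r i * r k * (1 + 4 * (v:ℝ)/θ) ^ (-(1:ℝ)/2) *
        Real.exp (-((y i + y k)/2 - μ)^2 / (θ/2 + 2 * (v:ℝ)) - (y i - y k)^2/(2*θ)))
      - (∑ i, r i * ∫ z, Real.exp (-(y i - z)^2/θ) ∂(gaussianReal μ v))^2 := by
  set P := gaussianReal μ v with hP
  set G : Fin n → ℝ → ℝ := fun i z => Real.exp (-(y i - z)^2/θ) with hG
  have hGcont : ∀ i, Continuous (G i) := by
    intro i; fun_prop
  have hGpos : ∀ i z, 0 < G i z := fun i z => Real.exp_pos _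
  have hGle : ∀ i z, G i z ≤ 1 := by
    intro i z
    rw [hG]
    apply Real.exp_le_one_iff.mpr
    exact div_nonpos_of_nonpos_of_nonneg (neg_nonpos.mpr (sq_nonneg _)) hθ.le
  have intG : ∀ i, Integrable (G i) P := by
    intro i
    refine Integrable.mono' (integrable_const 1) (hGcont i).aestronglyMeasurable ?_
    exact ae_of_all _ fun z => by
      rw [Real.norm_eq_abs, abs_of_pos (hGpos i z)]; exact hGle i z
  have intGG : ∀ i k, Integrable (fun z => G i z * G k z) P := by
    intro i k
    refine Integrable.mono' (integrable_const 1) ?_ ?_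
    · exact ((hGcont i).mul (hGcont k)).aestronglyMeasurable
    · exact ae_of_all _ fun z => by
        rw [Real.norm_eq_abs, abs_of_pos (mul_pos (hGpos i z) (hGpos k z))]
        exact mul_le_one₀ (hGle i z) (hGpos k z).le (hGle k z)
  -- per-term integral
  have hterm : ∀ i k, ∫ z, G i z * G k z ∂P =
      (1 + 4 * (v:ℝ)/θ) ^ (-(1:ℝ)/2) *
        Real.exp (-((y i + y k)/2 - μ)^2 / (θ/2 + 2 * (v:ℝ)) - (y i - y k)^2/(2*θ)) := by
    intro i k
    have hpoint : ∀ z, G i z * G k z =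
        Real.exp (-(y i - y k)^2/(2*θ)) * Real.exp (-(z - (y i + y k)/2)^2/(θ/2)) := by
      intro z
      rw [hG]
      simp only
      rw [← Real.exp_add, ← Real.exp_add]
      congr 1
      field_simp
      ring
    calc ∫ z, G i z * G k z ∂P
        = Real.exp (-(y i - y k)^2/(2*θ)) *
            ∫ z, Real.exp (-(z - (y i + y k)/2)^2/(θ/2)) ∂P := by
          simp_rw [hpoint]; rw [integral_const_mul]
      _ = Real.exp (-(y i - y k)^2/(2*θ)) *
            ((1 + 2*(v:ℝ)/(θ/2)) ^ (-(1:ℝ)/2) *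
              Real.exp (-((y i + y k)/2 - μ)^2 / (θ/2 + 2*(v:ℝ)))) := by
          rw [core μ v (by linarith : (0:ℝ) < θ/2) ((y i + y k)/2)]
      _ = _ := by
          rw [show 2*(v:ℝ)/(θ/2) = 4*(v:ℝ)/θ by field_simp; ring,
            Real.exp_sub,
            show (-(y i - y k)^2/(2*θ)) = -((y i - y k)^2/(2*θ)) by ring,
            Real.exp_neg]
          ring
  -- first conjunct
  have h1 : ∫ z, (∑ i, r i * G i z)^2 ∂P =
      ∑ i, ∑ k, r i * r k * (1 + 4 * (v:ℝ)/θ) ^ (-(1:ℝ)/2) *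
        Real.exp (-((y i + y k)/2 - μ)^2 / (θ/2 + 2 * (v:ℝ)) - (y i - y k)^2/(2*θ)) := by
    have expand : ∀ z, (∑ i, r i * G i z)^2 =
        ∑ i, ∑ k, (r i * r k) * (G i z * G k z) := by
      intro z
      rw [sq, Finset.sum_mul_sum]
      exact Finset.sum_congr rfl fun i _ => Finset.sum_congr rfl fun k _ => by ring
    simp_rw [expand]
    rw [integral_finset_sum _ (fun i _ =>
      integrable_finset_sum _ (fun k _ => (intGG i k).const_mul _))]
    refine Finset.sum_congr rfl fun i _ => ?_
    rw [integral_finset_sum _ (fun k _ => (intGG i k).const_mul _)]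
    refine Finset.sum_congr rfl fun k _ => ?_
    rw [integral_const_mul, hterm i k]
    ring
  refine ⟨h1, ?_⟩
  -- variance
  have hX2 : MemLp (fun z => ∑ i, r i * G i z) 2 P := by
    refine MemLp.of_bound ?_ (∑ i, |r i|) ?_
    · exact (continuous_finset_sum _ fun i _ => (continuous_const.mul (hGcont i))).aestronglyMeasurable
    · refine ae_of_all _ fun z => ?_
      rw [Real.norm_eq_abs]
      refine (Finset.abs_sum_le_sum_abs _ _).trans ?_
      refine Finset.sum_le_sum fun i _ => ?_
      rw [abs_mul, abs_of_pos (hGpos i z)]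
      calc |r i| * G i z ≤ |r i| * 1 := by
            exact mul_le_mul_of_nonneg_left (hGle i z) (abs_nonneg _)
        _ = |r i| := mul_one _
  have hvar := variance_eq_sub (μ := P) hX2
  have hEX : ∫ z, (∑ i, r i * G i z) ∂P = ∑ i, r i * ∫ z, G i z ∂P := by
    rw [integral_finset_sum _ (fun i _ => (intG i).const_mul _)]
    exact Finset.sum_congr rfl fun i _ => integral_const_mul _ _
  rw [hvar]
  have hsq : (∫ z, ((fun z => ∑ i, r i * G i z) ^ 2) z ∂P)
      = ∫ z, (∑ i, r i * G i z)^2 ∂P := by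
    congr 1
  simp only [Pi.pow_apply] at hvar ⊢
  rw [h1, hEX]
end
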